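/- Let I be a commutativity ideal of KQ with minimal generating set I₂. Every monomial m ∈ I is equivalent (under allowed transpositions) to a monomial of the form p·ab·q, where ab is a quadratic monomial with ab ∈ I and p, q are paths. Conversely, every monomial equivalent to a monomial of the form p·ab·q with ab ∈ I lies in I. -/

import Mathlib

/-! Common vocabulary for partly (anti-)commutative quiver algebras. -/

open Quiver

/-- The bundled arrows of a quiver. -/
def QArr (V : Type) [Quiver.{0} V] : Type := Σ a b : V, a ⟶ b

variable {V : Type} [Quiver.{0} V]

/-- Source of a bundled arrow. -/
def QArr.src (e : QArr V) : V := e.1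

/-- Target of a bundled arrow. -/
def QArr.tgt (e : QArr V) : V := e.2.1

/-- A bundled arrow is a loop if its source equals its target. -/
def QArr.IsLoop (e : QArr V) : Prop := e.src = e.tgt

/-- A path in a quiver bundled together with its endpoints. -/
structure QPath (V : Type) [Quiver.{0} V] : Type where
  src : V
  tgt : V
  path : Quiver.Path src tgt

namespace QPath

/-- The length of a bundled path. -/
def length (p : QPath V) : ℕ := p.path.length

/-- Composition of bundled paths, defined when the endpoints match. -/
def comp (p q : QPath V) (h : p.tgt = q.src) : QPath V :=
  ⟨p.src, q.tgt, p.path.comp (q.path.cast h.symm rfl)⟩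

/-- The bundled path of length one corresponding to an arrow. -/
def ofArrow (e : QArr V) : QPath V := ⟨e.1, e.2.1, Quiver.Hom.toPath e.2.2⟩

/-- The trivial path at a vertex. -/
def triv (v : V) : QPath V := ⟨v, v, Quiver.Path.nil⟩

end QPath

/-- The list of bundled arrows of a path, in order. -/
def Quiver.Path.arrList : ∀ {a b : V}, Quiver.Path a b → List (QArr V)
  | _, _, Quiver.Path.nil => []
  | _, _, Quiver.Path.cons p e => p.arrList ++ [⟨_, _, e⟩]

/-- The list of bundled arrows of a bundled path. -/
def QPath.arrows (p : QPath V) : List (QArr V) := p.path.arrList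

/-- A quiver is connected if any two vertices are joined by a sequence of arrows,
disregarding directions. -/
def QuiverConnected (V : Type) [Quiver.{0} V] : Prop :=
  ∀ a b : V, Relation.ReflTransGen (fun x y => Nonempty (x ⟶ y) ∨ Nonempty (y ⟶ x)) a b

/-- A realization of the path algebra `KQ` of a quiver `Q` over `K`: a `K`-algebra `A`
equipped with a `K`-basis indexed by the paths of `Q`, such that multiplication of basis
elements is given by concatenation of paths (and is `0` on non-composable paths), and such
that the identity is the sum of the classes of the trivial paths. -/
structure PathAlgebraSpec (K : Type) [Field K] (V : Type) [Quiver.{0} V]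
    (A : Type) [Ring A] [Algebra K A] : Type where
  basis : Module.Basis (QPath V) K A
  basis_mul : ∀ (p q : QPath V) (h : p.tgt = q.src),
    basis p * basis q = basis (p.comp q h)
  basis_mul_zero : ∀ p q : QPath V, p.tgt ≠ q.src → basis p * basis q = 0
  basis_one : (1 : A) = ∑ᶠ v : V, basis (QPath.triv v)

variable {K A : Type} [Field K] [Ring A] [Algebra K A]

/-- The element of the path algebra corresponding to an arrow. -/
noncomputable def PathAlgebraSpec.arr (S : PathAlgebraSpec K V A) (e : QArr V) : A :=
  S.basis (QPath.ofArrow e)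

/-- A generating set for an (anti-)commutativity ideal: a set `mono` of pairs of arrows
recording the quadratic monomial generators `ab`, and a set `comm` of pairs of arrows
recording the (anti-)commutativity generators `ab ∓ ba`. -/
structure QuadGens (V : Type) [Quiver.{0} V] : Type where
  mono : Set (QArr V × QArr V)
  comm : Set (QArr V × QArr V)

/-- Minimality of a generating set: if `ab ∓ ba` is one of the (anti-)commutativity
generators, then neither `ab` nor `ba` is one of the monomial generators. -/
def QuadGens.Minimal (G : QuadGens V) : Prop :=
  ∀ p ∈ G.comm, (p.1, p.2) ∉ G.mono ∧ (p.2, p.1) ∉ G.mono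

/-- The set of generators of an (anti-)commutativity ideal determined by `G`; for `ε = 1`
the binomial generators are the commutativity relations `ab - ba`, for `ε = -1` they are
the anti-commutativity relations `ab + ba`. -/
def QuadGens.gensSet (G : QuadGens V) (S : PathAlgebraSpec K V A) (ε : K) : Set A :=
  {x | ∃ p ∈ G.mono, x = S.arr p.1 * S.arr p.2} ∪
  {x | ∃ p ∈ G.comm, x = S.arr p.1 * S.arr p.2 - ε • (S.arr p.2 * S.arr p.1)}

/-- The span of all paths of length at least `n`; this is the `n`-th power of the
arrow ideal `J` of the path algebra. -/
def PathAlgebraSpec.geSpan (S : PathAlgebraSpec K V A) (n : ℕ) : Submodule K A :=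
  Submodule.span K (S.basis '' {p | n ≤ p.length})

/-- The span of all paths of length exactly `n`: the degree-`n` homogeneous component
of the path algebra. -/
def PathAlgebraSpec.degSpan (S : PathAlgebraSpec K V A) (n : ℕ) : Submodule K A :=
  Submodule.span K (S.basis '' {p | p.length = n})

/-- An ideal `I` of the path algebra is admissible if `Jⁿ ⊆ I ⊆ J²` for some `n ≥ 2`,
where `J` is the arrow ideal. -/
def PathAlgebraSpec.IsAdmissible (S : PathAlgebraSpec K V A) (I : TwoSidedIdeal A) : Prop :=
  ∃ n : ℕ, 2 ≤ n ∧ (S.geSpan n : Set A) ⊆ (I : Set A) ∧ (I : Set A) ⊆ (S.geSpan 2 : Set A)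

/-- An ideal is square-free if it contains no nonzero square `a²` of an arrow, i.e. no
square of a loop. -/
def PathAlgebraSpec.IsSquareFree (S : PathAlgebraSpec K V A) (I : TwoSidedIdeal A) : Prop :=
  ∀ e : QArr V, e.IsLoop → S.arr e * S.arr e ∉ I

/-- The generating set of the orthogonal ideal `I⊥`: the relations `ab ± ba` obtained by
flipping the sign of the (anti-)commutativity generators of `I`, together with all quadratic
monomials `cd` with `cd ≠ 0` and `cd ≠ dc` in `KQ/I`. -/
def QuadGens.perpGens (G : QuadGens V) (S : PathAlgebraSpec K V A) (ε : K)
    (I : TwoSidedIdeal A) : Set A :=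
  {x | ∃ p ∈ G.comm, x = S.arr p.1 * S.arr p.2 + ε • (S.arr p.2 * S.arr p.1)} ∪
  {x | ∃ c d : QArr V, S.arr c * S.arr d ∉ I ∧ S.arr c * S.arr d - S.arr d * S.arr c ∉ I ∧
    x = S.arr c * S.arr d}

/-- The orthogonal ideal `I⊥` of an (anti-)commutativity ideal. -/
def QuadGens.perpIdeal (G : QuadGens V) (S : PathAlgebraSpec K V A) (ε : K)
    (I : TwoSidedIdeal A) : TwoSidedIdeal A :=
  TwoSidedIdeal.span (G.perpGens S ε I)

/-- The directed-edge relation of the generator graph `Γ_{I⊥}` of the orthogonal ideal: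
there is a directed edge `c → d` for each quadratic monomial generator `cd` of `I⊥`,
i.e. whenever `cd ≠ 0` and `cd ≠ dc` in `KQ/I`. -/
def QuadGens.perpDirEdge (S : PathAlgebraSpec K V A) (I : TwoSidedIdeal A)
    (c d : QArr V) : Prop :=
  S.arr c * S.arr d ∉ I ∧ S.arr c * S.arr d - S.arr d * S.arr c ∉ I

/-- A directed graph (given by its edge relation) contains a directed cycle. -/
def HasDirectedCycle {α : Type} (E : α → α → Prop) : Prop :=
  ∃ a : α, Relation.TransGen E a a

/- The quotient algebra `KQ/I`. -/

/-- The `K`-algebra structure on the quotient of a `K`-algebra by a ring congruence. -/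
noncomputable instance RingCon.quotientAlgebra' (c : RingCon A) : Algebra K c.Quotient where
  algebraMap :=
    { toFun := fun k => ((algebraMap K A k : A) : c.Quotient)
      map_one' := by
        show ((algebraMap K A 1 : A) : c.Quotient) = 1
        rw [map_one, c.coe_one]
      map_mul' := fun x y => by
        show ((algebraMap K A (x * y) : A) : c.Quotient) =
          ((algebraMap K A x : A) : c.Quotient) * ((algebraMap K A y : A) : c.Quotient)
        rw [map_mul, c.coe_mul]
      map_zero' := by
        show ((algebraMap K A 0 : A) : c.Quotient) = 0
        rw [map_zero, c.coe_zero]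
      map_add' := fun x y => by
        show ((algebraMap K A (x + y) : A) : c.Quotient) =
          ((algebraMap K A x : A) : c.Quotient) + ((algebraMap K A y : A) : c.Quotient)
        rw [map_add, c.coe_add] }
  commutes' k x := by
    induction x using Quotient.inductionOn' with
    | h r =>
      show ((algebraMap K A k : A) : c.Quotient) * (r : c.Quotient) =
        (r : c.Quotient) * ((algebraMap K A k : A) : c.Quotient)
      rw [← c.coe_mul, ← c.coe_mul, Algebra.commutes]
  smul_def' k x := by
    induction x using Quotient.inductionOn' with
    | h r =>
      show ((k • r : A) : c.Quotient) =
        ((algebraMap K A k : A) : c.Quotient) * (r : c.Quotient)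
      rw [← c.coe_mul, Algebra.smul_def]

/-- The quotient algebra `A/I` of the path algebra by a two-sided ideal. -/
abbrev TwoSidedIdeal.Qt (I : TwoSidedIdeal A) : Type _ := I.ringCon.Quotient

/-- The quotient map `A → A/I` as a `K`-algebra homomorphism. -/
noncomputable def TwoSidedIdeal.πAlg (K : Type) [Field K] {A : Type} [Ring A] [Algebra K A]
    (I : TwoSidedIdeal A) : A →ₐ[K] I.Qt :=
  { I.ringCon.mk' with commutes' := fun _ => rfl }

/-- The degree-`n` homogeneous component of the quotient algebra `KQ/I`: the image of the
span of the paths of length `n`. -/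
noncomputable def PathAlgebraSpec.degQuot (S : PathAlgebraSpec K V A) (I : TwoSidedIdeal A)
    (n : ℕ) : Submodule K I.Qt :=
  Submodule.map (TwoSidedIdeal.πAlg K I).toLinearMap (S.degSpan n)

/-- The positively graded part `Z⁺(KQ/I) = ⊕_{i ≥ 1} Zⁱ(KQ/I)` of the center of `KQ/I`. -/
noncomputable def PathAlgebraSpec.ZPlus (S : PathAlgebraSpec K V A) (I : TwoSidedIdeal A) :
    Submodule K I.Qt :=
  ⨆ i : ℕ, (Subalgebra.toSubmodule (Subalgebra.center K I.Qt) ⊓ S.degQuot I (i + 1))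

/-- The even part `Z^ev(KQ/I) = ⊕_{k ≥ 0} Z^{2k}(KQ/I)` of the center of `KQ/I`. -/
noncomputable def PathAlgebraSpec.ZEv (S : PathAlgebraSpec K V A) (I : TwoSidedIdeal A) :
    Submodule K I.Qt :=
  ⨆ k : ℕ, (Subalgebra.toSubmodule (Subalgebra.center K I.Qt) ⊓ S.degQuot I (2 * k))

/-- A subset of an algebra (e.g. the carrier of a graded part of the center) is finitely
generated as a `K`-algebra if it coincides with the subalgebra generated by a finite subset
of itself. -/
def FinGenAsAlgebra (K : Type) [Field K] {B : Type} [Ring B] [Algebra K B]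
    (M : Set B) : Prop :=
  ∃ s : Finset B, ↑s ⊆ M ∧ M = (Algebra.adjoin K (↑s : Set B) : Set B)

/-- The subquiver `Q_x` of `Q`: its vertices are `x` together with all endpoints of arrows
incident to `x`, and its arrows are the arrows of `Q` with origin or target `x`. -/
def Nbhd (x : V) : Type :=
  {v : V // v = x ∨ ∃ e : QArr V, (e.src = x ∨ e.tgt = x) ∧ (e.src = v ∨ e.tgt = v)}

instance (x : V) : Quiver.{0} (Nbhd x) :=
  ⟨fun a b => {e : a.val ⟶ b.val // a.val = x ∨ b.val = x}⟩

/-- The inclusion of the arrows of `Q_x` into the arrows of `Q`. -/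
def Nbhd.arrToV {x : V} (E : QArr (Nbhd x)) : QArr V := ⟨E.1.val, E.2.1.val, E.2.2.val⟩

/-- The generating set of the ideal `I_x` of `KQ_x`: those generating relations of `I` all
of whose arrows lie in `Q_x`. -/
def QuadGens.restrict (G : QuadGens V) (x : V) : QuadGens (Nbhd x) where
  mono := {p | (Nbhd.arrToV p.1, Nbhd.arrToV p.2) ∈ G.mono}
  comm := {p | (Nbhd.arrToV p.1, Nbhd.arrToV p.2) ∈ G.comm}

/-- One swap of two adjacent letters (related by `R`) in a word of arrows. -/
inductive SwapStep (R : QArr V → QArr V → Prop) : List (QArr V) → List (QArr V) → Prop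
  | swap (u w : List (QArr V)) {a b : QArr V} (h : R a b) :
      SwapStep R (u ++ a :: b :: w) (u ++ b :: a :: w)

/-- `NSwap R n l m` means the word `m` is obtained from the word `l` by exactly `n`
swaps of adjacent letters related by `R`. -/
inductive NSwap (R : QArr V → QArr V → Prop) : ℕ → List (QArr V) → List (QArr V) → Prop
  | refl (l : List (QArr V)) : NSwap R 0 l l
  | step {n : ℕ} {l m k : List (QArr V)} :
      SwapStep R l k → NSwap R n k m → NSwap R (n + 1) l m

/-- The transposition `(ab)` is allowed if `ab ∉ I` and `ab ∓ ba` is one of the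
(anti-)commutativity generators. -/
def AllowedTransposition (S : PathAlgebraSpec K V A) (G : QuadGens V) (I : TwoSidedIdeal A)
    (a b : QArr V) : Prop :=
  S.arr a * S.arr b ∉ I ∧ ((a, b) ∈ G.comm ∨ (b, a) ∈ G.comm)

/-- Two paths are equivalent by exactly `n` allowed transpositions. -/
def PathEquivN (S : PathAlgebraSpec K V A) (G : QuadGens V) (I : TwoSidedIdeal A)
    (n : ℕ) (p q : QPath V) : Prop :=
  p.src = q.src ∧ p.tgt = q.tgt ∧
    NSwap (AllowedTransposition S G I) n p.arrows q.arrows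

/-- Two paths are equivalent, `p ∼ q`, if one is obtained from the other by a sequence of
allowed transpositions. -/
def PathEquiv (S : PathAlgebraSpec K V A) (G : QuadGens V) (I : TwoSidedIdeal A)
    (p q : QPath V) : Prop :=
  ∃ n : ℕ, PathEquivN S G I n p q

/-- The undirected-edge relation of the generator/relation graph: `a — b` whenever
`ab ∓ ba` is one of the (anti-)commutativity generators. -/
def UndirEdge (G : QuadGens V) (a b : QArr V) : Prop :=
  (a, b) ∈ G.comm ∨ (b, a) ∈ G.comm

/-- The directed-edge relation of the relation graph `Γ_rel`: `a → b` whenever `ab = 0`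
in `KQ/I`. -/
def RelDirEdge (S : PathAlgebraSpec K V A) (I : TwoSidedIdeal A) (a b : QArr V) : Prop :=
  S.arr a * S.arr b ∈ I

/-- A clique in the relation graph: a set of vertices pairwise joined by undirected edges. -/
def GraphClique (G : QuadGens V) (s : Set (QArr V)) : Prop :=
  ∀ a ∈ s, ∀ b ∈ s, a ≠ b → UndirEdge G a b

/-- The condition of Theorem `rel-graph`(i) on a set of vertices of the relation graph:
it is a clique of loops, and every other vertex `b` either has a directed edge from the
clique to `b` and one from `b` to the clique, or can be adjoined to the clique. -/
def CliqueCond (S : PathAlgebraSpec K V A) (G : QuadGens V) (I : TwoSidedIdeal A)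
    (s : Set (QArr V)) : Prop :=
  (∀ a ∈ s, a.IsLoop) ∧ GraphClique G s ∧
    ∀ b : QArr V, b ∉ s →
      ((∃ a ∈ s, RelDirEdge S I a b) ∧ (∃ a ∈ s, RelDirEdge S I b a)) ∨
        GraphClique G (insert b s)

open scoped Classical in
/-- The number of occurrences of an arrow in a list of arrows. -/
noncomputable def acount (l : List (QArr V)) (a : QArr V) : ℕ := l.count a


/-! ### Auxiliary development for Statement 15 -/

section Stmt15Aux

variable {V : Type} [Quiver.{0} V] {K A : Type} [Field K] [Ring A] [Algebra K A]

/-- Product of the arrows of a word in the path algebra. -/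
noncomputable def wval (S : PathAlgebraSpec K V A) (l : List (QArr V)) : A :=
  (l.map S.arr).prod

lemma wval_nil (S : PathAlgebraSpec K V A) : wval S [] = 1 := rfl

lemma wval_cons (S : PathAlgebraSpec K V A) (e : QArr V) (l : List (QArr V)) :
    wval S (e :: l) = S.arr e * wval S l := by simp [wval]

lemma wval_append (S : PathAlgebraSpec K V A) (l₁ l₂ : List (QArr V)) :
    wval S (l₁ ++ l₂) = wval S l₁ * wval S l₂ := by simp [wval]

lemma arrows_ofArrow (e : QArr V) : (QPath.ofArrow e).arrows = [e] := by
  show (Quiver.Hom.toPath e.2.2).arrList = [e]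
  simp [Quiver.Hom.toPath, Quiver.Path.arrList]
  rfl

lemma arrows_triv (v : V) : (QPath.triv v).arrows = [] := by
  show (Quiver.Path.nil : Quiver.Path v v).arrList = []
  simp [Quiver.Path.arrList]

lemma arrList_nil {a : V} : (Quiver.Path.nil : Quiver.Path a a).arrList = [] := by
  simp [Quiver.Path.arrList]

lemma arrList_concat {a b c : V} (p : Quiver.Path a b) (e : b ⟶ c) :
    (p.cons e).arrList = p.arrList ++ ([⟨b, c, e⟩] : List (QArr V)) := by
  simp [Quiver.Path.arrList]

lemma arrList_cast {a b a' b' : V} (p : Quiver.Path a b) (h : a = a') (h' : b = b') :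
    (p.cast h h').arrList = p.arrList := by subst h; subst h'; rw [Quiver.Path.cast_rfl_rfl]

lemma arrList_comp {a b c : V} (p : Quiver.Path a b) (q : Quiver.Path b c) :
    (p.comp q).arrList = p.arrList ++ q.arrList := by
  induction q with
  | nil => simp [Quiver.Path.arrList]
  | cons q e ih => simp [Quiver.Path.arrList, ih]

lemma arrows_comp (p q : QPath V) (h : p.tgt = q.src) :
    (p.comp q h).arrows = p.arrows ++ q.arrows := by
  show (p.path.comp (q.path.cast h.symm rfl)).arrList = p.path.arrList ++ q.path.arrList
  rw [arrList_comp, arrList_cast]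

lemma triv_comp (p : QPath V) : (QPath.triv p.src).comp p rfl = p := by
  show QPath.mk p.src p.tgt (Quiver.Path.nil.comp (p.path.cast rfl rfl)) = p
  rw [Quiver.Path.cast_rfl_rfl, Quiver.Path.nil_comp]

lemma comp_triv (p : QPath V) : p.comp (QPath.triv p.tgt) rfl = p := by
  show QPath.mk p.src p.tgt (p.path.comp (Quiver.Path.nil.cast rfl rfl)) = p
  rw [Quiver.Path.cast_rfl_rfl, Quiver.Path.comp_nil]

variable (S : PathAlgebraSpec K V A)

lemma triv_mul_basis (p : QPath V) :
    S.basis (QPath.triv p.src) * S.basis p = S.basis p := by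
  rw [S.basis_mul (QPath.triv p.src) p rfl, triv_comp]

lemma triv_mul_basis_ne (v : V) (p : QPath V) (h : v ≠ p.src) :
    S.basis (QPath.triv v) * S.basis p = 0 :=
  S.basis_mul_zero _ _ h

lemma basis_mul_triv (p : QPath V) :
    S.basis p * S.basis (QPath.triv p.tgt) = S.basis p := by
  rw [S.basis_mul p (QPath.triv p.tgt) rfl, comp_triv]

lemma basis_mul_triv_ne (p : QPath V) (v : V) (h : p.tgt ≠ v) :
    S.basis p * S.basis (QPath.triv v) = 0 :=
  S.basis_mul_zero _ _ h

lemma basis_cons {a b c : V} (p : Quiver.Path a b) (e : b ⟶ c) :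
    S.basis ⟨a, c, p.cons e⟩ = S.basis ⟨a, b, p⟩ * S.arr ⟨b, c, e⟩ := by
  have h := S.basis_mul ⟨a, b, p⟩ (QPath.ofArrow ⟨b, c, e⟩) rfl
  rw [show (QPath.mk a b p).comp (QPath.ofArrow ⟨b, c, e⟩) rfl = ⟨a, c, p.cons e⟩ by
    show QPath.mk a c (p.comp ((Quiver.Hom.toPath e).cast rfl rfl)) = _
    rw [Quiver.Path.cast_rfl_rfl]
    rfl] at h
  exact h.symm

lemma basis_eq_wval_aux {a b : V} (p : Quiver.Path a b) :
    S.basis ⟨a, b, p⟩ = S.basis (QPath.triv a) * wval S p.arrList := by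
  induction p with
  | nil =>
    show S.basis (QPath.triv a) = _
    rw [arrList_nil, wval_nil, mul_one]
  | cons p e ih =>
    rename_i c
    rw [basis_cons, ih, arrList_concat, wval_append, mul_assoc]
    congr 2
    exact (mul_one _).symm

lemma basis_eq_wval (m : QPath V) :
    S.basis m = S.basis (QPath.triv m.src) * wval S m.arrows := by
  obtain ⟨a, b, p⟩ := m
  exact basis_eq_wval_aux S p

lemma arr_mul_eq (a b : QArr V) (h : a.tgt = b.src) :
    S.arr a * S.arr b = S.basis ((QPath.ofArrow a).comp (QPath.ofArrow b) h) :=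
  S.basis_mul _ _ h

lemma arr_mul_zero (a b : QArr V) (h : a.tgt ≠ b.src) : S.arr a * S.arr b = 0 :=
  S.basis_mul_zero _ _ h

variable (G : QuadGens V) (I : TwoSidedIdeal A)

lemma comm_sub_mem (hI : I = TwoSidedIdeal.span (G.gensSet S 1)) {a b : QArr V}
    (h : (a, b) ∈ G.comm ∨ (b, a) ∈ G.comm) :
    S.arr a * S.arr b - S.arr b * S.arr a ∈ I := by
  subst hI
  rcases h with h | h
  · exact TwoSidedIdeal.subset_span (Or.inr ⟨(a, b), h, by rw [one_smul]⟩)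
  · have h1 : S.arr b * S.arr a - S.arr a * S.arr b ∈ TwoSidedIdeal.span (G.gensSet S 1) :=
      TwoSidedIdeal.subset_span (Or.inr ⟨(b, a), h, by rw [one_smul]⟩)
    have := (TwoSidedIdeal.span (G.gensSet S 1)).neg_mem h1
    simpa using this

lemma at_symm (hI : I = TwoSidedIdeal.span (G.gensSet S 1)) {a b : QArr V}
    (h : AllowedTransposition S G I a b) : AllowedTransposition S G I b a := by
  obtain ⟨hn, hc⟩ := h
  refine ⟨fun hba => hn ?_, hc.symm⟩
  have hs := comm_sub_mem S G I hI hc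
  have := I.add_mem hs hba
  simpa using this

lemma at_loops (hI : I = TwoSidedIdeal.span (G.gensSet S 1)) {a b : QArr V}
    (h : AllowedTransposition S G I a b) :
    a.tgt = a.src ∧ b.src = a.src ∧ b.tgt = a.src := by
  obtain ⟨hn, hc⟩ := h
  have hs : S.arr a * S.arr b - S.arr b * S.arr a ∈ I := comm_sub_mem S G I hI hc
  have hab : a.tgt = b.src := by
    by_contra hctr
    exact hn (by rw [arr_mul_zero S a b hctr]; exact I.zero_mem)
  have hba : b.tgt = a.src := by
    by_contra hctr
    apply hn
    have h0 : S.arr b * S.arr a = 0 := arr_mul_zero S b a hctr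
    have : S.arr a * S.arr b - S.arr b * S.arr a + S.arr b * S.arr a ∈ I :=
      I.add_mem hs (by rw [h0]; exact I.zero_mem)
    simpa using this
  set P := (QPath.ofArrow a).comp (QPath.ofArrow b) hab with hP
  set Q := (QPath.ofArrow b).comp (QPath.ofArrow a) hba with hQ
  have key : S.basis (QPath.triv a.src) * (S.arr a * S.arr b - S.arr b * S.arr a) *
      S.basis (QPath.triv b.tgt) ∈ I :=
    I.mul_mem_right _ _ (I.mul_mem_left _ _ hs)
  rw [arr_mul_eq S a b hab, arr_mul_eq S b a hba, ← hP, ← hQ, mul_sub, sub_mul] at key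
  have hX : S.basis (QPath.triv a.src) * S.basis P * S.basis (QPath.triv b.tgt) = S.basis P := by
    rw [show S.basis (QPath.triv a.src) * S.basis P = S.basis P from triv_mul_basis S P,
      show S.basis P * S.basis (QPath.triv b.tgt) = S.basis P from basis_mul_triv S P]
  rw [hX] at key
  by_cases hbs : b.src = a.src
  · by_cases hbt : a.tgt = b.tgt
    · exact ⟨hab.trans hbs, hbs, hba⟩
    · exfalso
      have hY1 : S.basis (QPath.triv a.src) * S.basis Q = S.basis Q := by
        rw [← hbs]; exact triv_mul_basis S Q
      have hY2 : S.basis Q * S.basis (QPath.triv b.tgt) = 0 :=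
        basis_mul_triv_ne S Q b.tgt hbt
      rw [hY1, hY2, sub_zero] at key
      exact hn (by rw [arr_mul_eq S a b hab, ← hP]; exact key)
  · exfalso
    have hY1 : S.basis (QPath.triv a.src) * S.basis Q = 0 :=
      triv_mul_basis_ne S a.src Q (fun hh => hbs hh.symm)
    rw [hY1, zero_mul, sub_zero] at key
    exact hn (by rw [arr_mul_eq S a b hab, ← hP]; exact key)

section swaps

variable {R : QArr V → QArr V → Prop}

lemma swapStep_symm (hsym : ∀ {a b : QArr V}, R a b → R b a) {l k : List (QArr V)}
    (h : SwapStep R l k) : SwapStep R k l := by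
  cases h with
  | swap u w hab => exact SwapStep.swap u w (hsym hab)

lemma nswap_trans : ∀ {n n' : ℕ} {l m k : List (QArr V)},
    NSwap R n l m → NSwap R n' m k → NSwap R (n + n') l k
  | _, _, _, _, _, NSwap.refl _, h2 => by simpa using h2
  | _, _, _, _, _, NSwap.step s rest, h2 => by
    have := NSwap.step s (nswap_trans rest h2)
    simpa [Nat.succ_add] using this

lemma nswap_snoc : ∀ {n : ℕ} {l m k : List (QArr V)},
    NSwap R n l m → SwapStep R m k → NSwap R (n + 1) l k
  | _, _, _, _, NSwap.refl _, s => NSwap.step s (NSwap.refl _)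
  | _, _, _, _, NSwap.step s rest, s2 => NSwap.step s (nswap_snoc rest s2)

lemma nswap_symm (hsym : ∀ {a b : QArr V}, R a b → R b a) :
    ∀ {n : ℕ} {l m : List (QArr V)}, NSwap R n l m → NSwap R n m l
  | _, _, _, NSwap.refl _ => NSwap.refl _
  | _, _, _, NSwap.step s rest => nswap_snoc (nswap_symm hsym rest) (swapStep_symm hsym s)

lemma swapStep_prefix (c : List (QArr V)) {l k : List (QArr V)} (h : SwapStep R l k) :
    SwapStep R (c ++ l) (c ++ k) := by
  cases h with
  | swap u w hab =>
    rw [← List.append_assoc, ← List.append_assoc]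
    exact SwapStep.swap (c ++ u) w hab

lemma swapStep_suffix (c : List (QArr V)) {l k : List (QArr V)} (h : SwapStep R l k) :
    SwapStep R (l ++ c) (k ++ c) := by
  cases h with
  | swap u w hab =>
    have := SwapStep.swap (R := R) u (w ++ c) hab
    simpa [List.append_assoc] using this

lemma nswap_prefix (c : List (QArr V)) :
    ∀ {n : ℕ} {l m : List (QArr V)}, NSwap R n l m → NSwap R n (c ++ l) (c ++ m)
  | _, _, _, NSwap.refl _ => NSwap.refl _
  | _, _, _, NSwap.step s rest => NSwap.step (swapStep_prefix c s) (nswap_prefix c rest)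

lemma nswap_suffix (c : List (QArr V)) :
    ∀ {n : ℕ} {l m : List (QArr V)}, NSwap R n l m → NSwap R n (l ++ c) (m ++ c)
  | _, _, _, NSwap.refl _ => NSwap.refl _
  | _, _, _, NSwap.step s rest => NSwap.step (swapStep_suffix c s) (nswap_suffix c rest)

end swaps

lemma pe_refl (m : QPath V) : PathEquiv S G I m m := ⟨0, rfl, rfl, NSwap.refl _⟩

lemma pe_symm (hI : I = TwoSidedIdeal.span (G.gensSet S 1)) {p q : QPath V}
    (h : PathEquiv S G I p q) : PathEquiv S G I q p := by
  obtain ⟨n, h1, h2, h3⟩ := h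
  exact ⟨n, h1.symm, h2.symm, nswap_symm (fun h => at_symm S G I hI h) h3⟩

lemma pe_trans {p q r : QPath V} (h : PathEquiv S G I p q) (h' : PathEquiv S G I q r) :
    PathEquiv S G I p r := by
  obtain ⟨n, h1, h2, h3⟩ := h
  obtain ⟨n', g1, g2, g3⟩ := h'
  exact ⟨n + n', h1.trans g1, h2.trans g2, nswap_trans h3 g3⟩

lemma pe_compL (r p q : QPath V) (hc : r.tgt = p.src) (hc' : r.tgt = q.src)
    (h : PathEquiv S G I p q) : PathEquiv S G I (r.comp p hc) (r.comp q hc') := by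
  obtain ⟨n, h1, h2, h3⟩ := h
  refine ⟨n, rfl, h2, ?_⟩
  show NSwap _ n (r.comp p hc).arrows (r.comp q hc').arrows
  rw [arrows_comp, arrows_comp]
  exact nswap_prefix _ h3

lemma pe_compR (p q r : QPath V) (hc : p.tgt = r.src) (hc' : q.tgt = r.src)
    (h : PathEquiv S G I p q) : PathEquiv S G I (p.comp r hc) (q.comp r hc') := by
  obtain ⟨n, h1, h2, h3⟩ := h
  refine ⟨n, h1, rfl, ?_⟩
  show NSwap _ n (p.comp r hc).arrows (q.comp r hc').arrows
  rw [arrows_comp, arrows_comp]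
  exact nswap_suffix _ h3

/-- The set of monomials equivalent to one containing a quadratic relation of `I`. -/
def TSet : Set (QPath V) :=
  {m | ∃ m', PathEquiv S G I m m' ∧ ∃ (a b : QArr V) (l₁ l₂ : List (QArr V)),
    m'.arrows = l₁ ++ a :: b :: l₂ ∧ S.arr a * S.arr b ∈ I}

lemma TSet_of_pe {m p : QPath V} (h : PathEquiv S G I m p) (hp : p ∈ TSet S G I) :
    m ∈ TSet S G I := by
  obtain ⟨m', hpe, rest⟩ := hp
  exact ⟨m', pe_trans S G I h hpe, rest⟩

lemma TSet_compL (r p : QPath V) (hc : r.tgt = p.src) (hp : p ∈ TSet S G I) :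
    r.comp p hc ∈ TSet S G I := by
  obtain ⟨m', ⟨n, h1, h2, h3⟩, a, b, l₁, l₂, harr, hab⟩ := hp
  refine ⟨r.comp m' (hc.trans h1), pe_compL S G I r p m' hc (hc.trans h1) ⟨n, h1, h2, h3⟩,
    a, b, r.arrows ++ l₁, l₂, ?_, hab⟩
  rw [arrows_comp, harr, List.append_assoc]

lemma TSet_compR (p r : QPath V) (hc : p.tgt = r.src) (hp : p ∈ TSet S G I) :
    p.comp r hc ∈ TSet S G I := by
  obtain ⟨m', ⟨n, h1, h2, h3⟩, a, b, l₁, l₂, harr, hab⟩ := hp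
  refine ⟨m'.comp r (h2 ▸ hc), pe_compR S G I p m' r hc (h2 ▸ hc) ⟨n, h1, h2, h3⟩,
    a, b, l₁, l₂ ++ r.arrows, ?_, hab⟩
  rw [arrows_comp, harr]
  simp [List.append_assoc]

/-- Differences of equivalent monomials. -/
def Dset : Set A := {x | ∃ p q : QPath V, PathEquiv S G I p q ∧ x = S.basis p - S.basis q}

/-- The candidate submodule equal to `I`. -/
noncomputable def Jmod : Submodule K A :=
  Submodule.span K (S.basis '' TSet S G I ∪ Dset S G I)

lemma basis_mul_mem_J (r : QPath V) {y : A} (hy : y ∈ Jmod S G I) :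
    S.basis r * y ∈ Jmod S G I := by
  induction hy using Submodule.span_induction with
  | mem x hx =>
    rcases hx with ⟨p, hpT, rfl⟩ | ⟨p, q, hpq, rfl⟩
    · by_cases hc : r.tgt = p.src
      · rw [S.basis_mul r p hc]
        exact Submodule.subset_span (Or.inl ⟨r.comp p hc, TSet_compL S G I r p hc hpT, rfl⟩)
      · rw [S.basis_mul_zero r p hc]; exact zero_mem _
    · obtain ⟨n, h1, h2, h3⟩ := hpq
      by_cases hc : r.tgt = p.src
      · rw [mul_sub, S.basis_mul r p hc, S.basis_mul r q (hc.trans h1)]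
        exact Submodule.subset_span (Or.inr ⟨r.comp p hc, r.comp q (hc.trans h1),
          pe_compL S G I r p q hc (hc.trans h1) ⟨n, h1, h2, h3⟩, rfl⟩)
      · rw [mul_sub, S.basis_mul_zero r p hc,
          S.basis_mul_zero r q (fun hh => hc (hh.trans h1.symm)), sub_zero]
        exact zero_mem _
  | zero => rw [mul_zero]; exact zero_mem _
  | add x y _ _ ihx ihy => rw [mul_add]; exact add_mem ihx ihy
  | smul c x _ ih => rw [mul_smul_comm]; exact Submodule.smul_mem _ c ih

lemma mem_J_basis_mul (r : QPath V) {y : A} (hy : y ∈ Jmod S G I) :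
    y * S.basis r ∈ Jmod S G I := by
  induction hy using Submodule.span_induction with
  | mem x hx =>
    rcases hx with ⟨p, hpT, rfl⟩ | ⟨p, q, hpq, rfl⟩
    · by_cases hc : p.tgt = r.src
      · rw [S.basis_mul p r hc]
        exact Submodule.subset_span (Or.inl ⟨p.comp r hc, TSet_compR S G I p r hc hpT, rfl⟩)
      · rw [S.basis_mul_zero p r hc]; exact zero_mem _
    · obtain ⟨n, h1, h2, h3⟩ := hpq
      by_cases hc : p.tgt = r.src
      · rw [sub_mul, S.basis_mul p r hc, S.basis_mul q r (h2 ▸ hc)]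
        exact Submodule.subset_span (Or.inr ⟨p.comp r hc, q.comp r (h2 ▸ hc),
          pe_compR S G I p q r hc (h2 ▸ hc) ⟨n, h1, h2, h3⟩, rfl⟩)
      · rw [sub_mul, S.basis_mul_zero p r hc,
          S.basis_mul_zero q r (fun hh => hc (h2 ▸ hh)), sub_zero]
        exact zero_mem _
  | zero => rw [zero_mul]; exact zero_mem _
  | add x y _ _ ihx ihy => rw [add_mul]; exact add_mem ihx ihy
  | smul c x _ ih => rw [smul_mul_assoc]; exact Submodule.smul_mem _ c ih

lemma mul_mem_J (x : A) {y : A} (hy : y ∈ Jmod S G I) : x * y ∈ Jmod S G I := by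
  have hx : x ∈ Submodule.span K (Set.range S.basis) := S.basis.mem_span x
  induction hx using Submodule.span_induction with
  | mem z hz =>
    obtain ⟨r, rfl⟩ := hz
    exact basis_mul_mem_J S G I r hy
  | zero => rw [zero_mul]; exact zero_mem _
  | add a b _ _ iha ihb => rw [add_mul]; exact add_mem iha ihb
  | smul c a _ ih => rw [smul_mul_assoc]; exact Submodule.smul_mem _ c ih

lemma mem_J_mul (x : A) {y : A} (hy : y ∈ Jmod S G I) : y * x ∈ Jmod S G I := by
  have hx : x ∈ Submodule.span K (Set.range S.basis) := S.basis.mem_span x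
  induction hx using Submodule.span_induction with
  | mem z hz =>
    obtain ⟨r, rfl⟩ := hz
    exact mem_J_basis_mul S G I r hy
  | zero => rw [mul_zero]; exact zero_mem _
  | add a b _ _ iha ihb => rw [mul_add]; exact add_mem iha ihb
  | smul c a _ ih => rw [mul_smul_comm]; exact Submodule.smul_mem _ c ih

lemma arrmul_mem_J {a b : QArr V} (hab : S.arr a * S.arr b ∈ I) :
    S.arr a * S.arr b ∈ Jmod S G I := by
  by_cases hc : a.tgt = b.src
  · rw [arr_mul_eq S a b hc]
    refine Submodule.subset_span (Or.inl ⟨_, ⟨_, pe_refl S G I _, a, b, [], [], ?_, hab⟩, rfl⟩)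
    rw [arrows_comp (QPath.ofArrow a) (QPath.ofArrow b) hc, arrows_ofArrow, arrows_ofArrow]
    rfl
  · rw [arr_mul_zero S a b hc]; exact zero_mem _

lemma gens_subset_J (hI : I = TwoSidedIdeal.span (G.gensSet S 1)) :
    G.gensSet S 1 ⊆ (Jmod S G I : Set A) := by
  rintro x (⟨p, hp, rfl⟩ | ⟨p, hp, rfl⟩)
  · refine arrmul_mem_J S G I ?_
    rw [hI]
    exact TwoSidedIdeal.subset_span (Or.inl ⟨p, hp, rfl⟩)
  · rw [one_smul]
    by_cases habI : S.arr p.1 * S.arr p.2 ∈ I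
    · have hbaI : S.arr p.2 * S.arr p.1 ∈ I := by
        have := I.sub_mem habI (comm_sub_mem S G I hI (Or.inl hp))
        simpa using this
      exact sub_mem (arrmul_mem_J S G I habI) (arrmul_mem_J S G I hbaI)
    · have hAT : AllowedTransposition S G I p.1 p.2 := ⟨habI, Or.inl hp⟩
      obtain ⟨hl1, hl2, hl3⟩ := at_loops S G I hI hAT
      have hc1 : p.1.tgt = p.2.src := hl1.trans hl2.symm
      have hc2 : p.2.tgt = p.1.src := hl3
      rw [arr_mul_eq S _ _ hc1, arr_mul_eq S _ _ hc2]
      refine Submodule.subset_span (Or.inr ⟨_, _, ⟨1, ?_, ?_, ?_⟩, rfl⟩)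
      · exact hl2.symm
      · exact hl3.trans hl1.symm
      · show NSwap _ 1 ((QPath.ofArrow p.1).comp (QPath.ofArrow p.2) hc1).arrows
          ((QPath.ofArrow p.2).comp (QPath.ofArrow p.1) hc2).arrows
        rw [arrows_comp (QPath.ofArrow p.1) (QPath.ofArrow p.2) hc1,
          arrows_comp (QPath.ofArrow p.2) (QPath.ofArrow p.1) hc2, arrows_ofArrow, arrows_ofArrow]
        exact NSwap.step (SwapStep.swap [] [] hAT) (NSwap.refl _)

lemma nswap_sub_mem (hI : I = TwoSidedIdeal.span (G.gensSet S 1)) (v : V) :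
    ∀ {n : ℕ} {l l' : List (QArr V)}, NSwap (AllowedTransposition S G I) n l l' →
      S.basis (QPath.triv v) * wval S l - S.basis (QPath.triv v) * wval S l' ∈ I
  | _, _, _, NSwap.refl _ => by simpa using I.zero_mem
  | _, _, _, NSwap.step s rest => by
    rename_i k _
    cases s with
    | swap u w hab =>
      rename_i a b
      have hsub : S.arr a * S.arr b - S.arr b * S.arr a ∈ I := comm_sub_mem S G I hI hab.2
      have hmem : (S.basis (QPath.triv v) * wval S u) *
          (S.arr a * S.arr b - S.arr b * S.arr a) * wval S w ∈ I :=
        I.mul_mem_right _ _ (I.mul_mem_left _ _ hsub)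
      have heq : S.basis (QPath.triv v) * wval S (u ++ a :: b :: w) -
          S.basis (QPath.triv v) * wval S (u ++ b :: a :: w) =
          (S.basis (QPath.triv v) * wval S u) *
            (S.arr a * S.arr b - S.arr b * S.arr a) * wval S w := by
        simp [wval_append, wval_cons, mul_sub, sub_mul, mul_assoc]
      have hstep : S.basis (QPath.triv v) * wval S (u ++ a :: b :: w) -
          S.basis (QPath.triv v) * wval S (u ++ b :: a :: w) ∈ I := by
        rw [heq]; exact hmem
      have hrest := nswap_sub_mem hI v rest
      have := I.add_mem hstep hrest
      simpa using this

end Stmt15Aux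


/-- For a commutativity ideal `I` with minimal generating set `I₂`:
a monomial `m` lies in `I` if and only if `m` is equivalent, under allowed transpositions,
to a monomial of the form `p · ab · q` with `ab ∈ I`. -/
theorem stmt_15 {V : Type} [Quiver.{0} V] [Finite V] [Finite (QArr V)]
    {K : Type} [Field K] [IsAlgClosed K]
    {A : Type} [Ring A] [Algebra K A]
    (hconn : QuiverConnected V)
    (S : PathAlgebraSpec K V A)
    (G : QuadGens V) (hmin : G.Minimal)
    (I : TwoSidedIdeal A) (hI : I = TwoSidedIdeal.span (G.gensSet S 1)) :
    ∀ m : QPath V,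
      S.basis m ∈ I ↔
        ∃ m' : QPath V, PathEquiv S G I m m' ∧
          ∃ (a b : QArr V) (l₁ l₂ : List (QArr V)),
            m'.arrows = l₁ ++ a :: b :: l₂ ∧ S.arr a * S.arr b ∈ I := by
  intro m
  constructor
  · intro hm
    by_contra hcon
    have hmT : m ∉ TSet S G I := hcon
    -- `basis m` lies in the submodule `Jmod`
    classical
    let J' : TwoSidedIdeal A := TwoSidedIdeal.mk' (Jmod S G I : Set A)
      (zero_mem _)
      (fun h1 h2 => add_mem h1 h2)
      (fun h => neg_mem h)
      (fun {x y} h => mul_mem_J S G I x h)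
      (fun {x y} h => mem_J_mul S G I y h)
    have hmJ : S.basis m ∈ Jmod S G I := by
      have hx : S.basis m ∈ TwoSidedIdeal.span (G.gensSet S 1) := hI ▸ hm
      have hsub : G.gensSet S 1 ⊆ (J' : Set A) := by
        intro y hy
        show y ∈ J'
        rw [TwoSidedIdeal.mem_mk']
        exact gens_subset_J S G I hI hy
      have := TwoSidedIdeal.mem_span_iff.mp hx J' hsub
      rwa [TwoSidedIdeal.mem_mk'] at this
    -- linear functional distinguishing the class of `m`
    let f : QPath V → K := fun p => if PathEquiv S G I m p then 1 else 0
    have hφ : ∀ x ∈ Jmod S G I, S.basis.constr K f x = 0 := by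
      intro x hx
      induction hx using Submodule.span_induction with
      | mem z hz =>
        rcases hz with ⟨p, hpT, rfl⟩ | ⟨p, q, hpq, rfl⟩
        · rw [Module.Basis.constr_basis]
          exact if_neg (fun hrel => hmT (TSet_of_pe S G I hrel hpT))
        · rw [map_sub, Module.Basis.constr_basis, Module.Basis.constr_basis]
          by_cases hmp : PathEquiv S G I m p
          · rw [show f p = 1 from if_pos hmp,
              show f q = 1 from if_pos (pe_trans S G I hmp hpq), sub_self]
          · rw [show f p = 0 from if_neg hmp,
              show f q = 0 from
                if_neg (fun hmq => hmp (pe_trans S G I hmq (pe_symm S G I hI hpq))),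
              sub_self]
      | zero => exact map_zero _
      | add a b _ _ iha ihb => rw [map_add, iha, ihb, add_zero]
      | smul c a _ ih => rw [map_smul, ih, smul_zero]
    have h1 : S.basis.constr K f (S.basis m) = 1 := by
      rw [Module.Basis.constr_basis]
      exact if_pos (pe_refl S G I m)
    rw [hφ _ hmJ] at h1
    exact one_ne_zero h1.symm
  · rintro ⟨m', hpe, a, b, l₁, l₂, harr, habI⟩
    have hm'I : S.basis m' ∈ I := by
      rw [basis_eq_wval S m', harr,
        show wval S (l₁ ++ a :: b :: l₂)
            = wval S l₁ * (S.arr a * S.arr b * wval S l₂) by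
          simp [wval_append, wval_cons, mul_assoc]]
      exact I.mul_mem_left _ _ (I.mul_mem_left _ _ (I.mul_mem_right _ _ habI))
    obtain ⟨n, hsrc, htgt, hsw⟩ := hpe
    have hdiff : S.basis m - S.basis m' ∈ I := by
      rw [basis_eq_wval S m, basis_eq_wval S m', ← hsrc]
      exact nswap_sub_mem S G I hI m.src hsw
    have := I.add_mem hdiff hm'I
    simpa using this
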